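/- Let $a \in \mathbb{R}^n$ with all $a_i > 0$ and $\sigma_k(a) = 1$ for some $2 \le k \le n$. Then for every $1 \le m \le k-1$ and every index $i$, one has $\sigma_m(a)\,\sigma_{k-1;i}(a) \ge \sigma_{m-1;i}(a)$. -/

import Mathlib

open Finset

/-- The `k`-th elementary symmetric function of the variables `a i` for `i ∈ s`. -/
noncomputable def esym {n : ℕ} (s : Finset (Fin n)) (k : ℕ) (a : Fin n → ℝ) : ℝ :=
  ∑ T ∈ s.powersetCard k, ∏ i ∈ T, a i

lemma esym_nonneg {n : ℕ} (s : Finset (Fin n)) (k : ℕ) (a : Fin n → ℝ)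
    (ha : ∀ i, 0 ≤ a i) : 0 ≤ esym s k a :=
  Finset.sum_nonneg fun T _ => Finset.prod_nonneg fun i _ => ha i

lemma esym_insert {n : ℕ} {x : Fin n} {s : Finset (Fin n)} (hx : x ∉ s) (j : ℕ)
    (a : Fin n → ℝ) :
    esym (insert x s) (j + 1) a = esym s (j + 1) a + a x * esym s j a := by
  unfold esym
  rw [Finset.powersetCard_succ_insert hx, Finset.sum_union, Finset.sum_image, Finset.mul_sum]
  · congr 1
    refine Finset.sum_congr rfl fun T hT => ?_
    rw [Finset.mem_powersetCard] at hT
    rw [Finset.prod_insert (fun h => hx (hT.1 h))]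
  · intro T hT U hU hTU
    rw [Finset.mem_coe, Finset.mem_powersetCard] at hT hU
    have hxT : x ∉ T := fun h => hx (hT.1 h)
    have hxU : x ∉ U := fun h => hx (hU.1 h)
    rw [← Finset.erase_insert hxT, ← Finset.erase_insert hxU, hTU]
  · rw [Finset.disjoint_right]
    intro T hT hT'
    simp only [Finset.mem_image] at hT
    obtain ⟨U, hU, rfl⟩ := hT
    rw [Finset.mem_powersetCard] at hT'
    exact hx (hT'.1 (Finset.mem_insert_self x U))

lemma esym_key {n : ℕ} (a : Fin n → ℝ) (ha : ∀ i, 0 ≤ a i) (s : Finset (Fin n)) :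
    ∀ p q : ℕ, p ≤ q + 1 →
      esym s p a * esym s (q + 2) a ≤ esym s (p + 1) a * esym s (q + 1) a := by
  classical
  induction s using Finset.induction_on with
  | empty =>
    intro p q _
    have h1 : esym (∅ : Finset (Fin n)) (q + 2) a = 0 := by
      unfold esym
      rw [Finset.powersetCard_eq_empty.2 (by simp), Finset.sum_empty]
    have h2 : esym (∅ : Finset (Fin n)) (p + 1) a = 0 := by
      unfold esym
      rw [Finset.powersetCard_eq_empty.2 (by simp), Finset.sum_empty]
    rw [h1, h2, mul_zero, zero_mul]
  | @insert x s hx ih =>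
    intro p q hpq
    have hc : 0 ≤ a x := ha x
    have hnn : ∀ j, 0 ≤ esym s j a := fun j => esym_nonneg s j a ha
    cases p with
    | zero =>
      have h0 : esym (insert x s) 0 a = 1 := by
        unfold esym; rw [Finset.powersetCard_zero]; simp
      rw [h0, esym_insert hx (q + 1) a, esym_insert hx q a, esym_insert hx 0 a]
      have hIH := ih 0 q (by omega)
      have h00 : esym s 0 a = 1 := by
        unfold esym; rw [Finset.powersetCard_zero]; simp
      rw [h00] at hIH ⊢
      nlinarith [hnn q, hnn (q + 1), hnn (q + 2), hnn 1, mul_nonneg hc hc,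
        mul_nonneg hc (hnn q), mul_nonneg (mul_nonneg hc hc) (hnn q),
        mul_nonneg hc (mul_nonneg (hnn 1) (hnn q))]
    | succ p' =>
      have hp'q : p' ≤ q := by omega
      have h1 : esym s (p' + 1) a * esym s (q + 2) a
          ≤ esym s (p' + 2) a * esym s (q + 1) a := ih (p' + 1) q (by omega)
      have h2 : esym s p' a * esym s (q + 1) a ≤ esym s (p' + 1) a * esym s q a := by
        cases q with
        | zero =>
          have : p' = 0 := by omega
          subst this
          rw [mul_comm]
        | succ q'' => exact ih p' q'' (by omega)
      have h3 : esym s p' a * esym s (q + 2) a ≤ esym s (p' + 2) a * esym s q a := by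
        rcases eq_or_lt_of_le hp'q with h | h
        · rw [h, mul_comm]
        · cases q with
          | zero => omega
          | succ q'' =>
            calc esym s p' a * esym s (q'' + 1 + 2) a
                ≤ esym s (p' + 1) a * esym s (q'' + 2) a := ih p' (q'' + 1) (by omega)
              _ ≤ esym s (p' + 2) a * esym s (q'' + 1) a := ih (p' + 1) q'' (by omega)
      rw [esym_insert hx p' a, esym_insert hx (q + 1) a, esym_insert hx (p' + 1) a,
        esym_insert hx q a]
      nlinarith [mul_le_mul_of_nonneg_left h3 hc,
        mul_le_mul_of_nonneg_left h2 (mul_nonneg hc hc)]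

/-- If σ_k(a) = 1 then σ_m(a) σ_{k-1;i}(a) ≥ σ_{m-1;i}(a) for 1 ≤ m ≤ k-1. -/
theorem stmt_8 (n k m : ℕ) (hk : 2 ≤ k) (hkn : k ≤ n)
    (a : Fin n → ℝ) (hpos : ∀ i, 0 < a i) (hsk : esym Finset.univ k a = 1)
    (hm : 1 ≤ m) (hmk : m ≤ k - 1) (i : Fin n) :
    esym (Finset.univ.erase i) (m - 1) a
      ≤ esym Finset.univ m a * esym (Finset.univ.erase i) (k - 1) a := by
  classical
  have ha : ∀ j, 0 ≤ a j := fun j => (hpos j).le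
  obtain ⟨m', rfl⟩ : ∃ m', m = m' + 1 := ⟨m - 1, by omega⟩
  obtain ⟨k', rfl⟩ : ∃ k', k = k' + 2 := ⟨k - 2, by omega⟩
  have hins : insert i (Finset.univ.erase i) = (Finset.univ : Finset (Fin n)) :=
    Finset.insert_erase (Finset.mem_univ i)
  have hxerase : i ∉ Finset.univ.erase i := Finset.notMem_erase i _
  have hm1 : esym Finset.univ (m' + 1) a
      = esym (Finset.univ.erase i) (m' + 1) a + a i * esym (Finset.univ.erase i) m' a := by
    have h := esym_insert hxerase m' a; rw [hins] at h; exact h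
  have hk1 : esym Finset.univ (k' + 2) a
      = esym (Finset.univ.erase i) (k' + 2) a
        + a i * esym (Finset.univ.erase i) (k' + 1) a := by
    have h := esym_insert hxerase (k' + 1) a; rw [hins] at h; exact h
  rw [hk1] at hsk
  have hkey : esym (Finset.univ.erase i) m' a * esym (Finset.univ.erase i) (k' + 2) a
      ≤ esym (Finset.univ.erase i) (m' + 1) a * esym (Finset.univ.erase i) (k' + 1) a :=
    esym_key a ha _ m' k' (by omega)
  have hnn : ∀ j, 0 ≤ esym (Finset.univ.erase i) j a :=
    fun j => esym_nonneg _ j a ha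
  show esym (Finset.univ.erase i) m' a
      ≤ esym Finset.univ (m' + 1) a * esym (Finset.univ.erase i) (k' + 1) a
  rw [hm1]
  calc esym (Finset.univ.erase i) m' a
      = esym (Finset.univ.erase i) m' a
        * (esym (Finset.univ.erase i) (k' + 2) a
          + a i * esym (Finset.univ.erase i) (k' + 1) a) := by rw [hsk, mul_one]
    _ = esym (Finset.univ.erase i) m' a * esym (Finset.univ.erase i) (k' + 2) a
        + a i * (esym (Finset.univ.erase i) m' a
          * esym (Finset.univ.erase i) (k' + 1) a) := by ring
    _ ≤ esym (Finset.univ.erase i) (m' + 1) a * esym (Finset.univ.erase i) (k' + 1) a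
        + a i * (esym (Finset.univ.erase i) m' a
          * esym (Finset.univ.erase i) (k' + 1) a) := add_le_add_left hkey _
    _ = (esym (Finset.univ.erase i) (m' + 1) a
        + a i * esym (Finset.univ.erase i) m' a)
        * esym (Finset.univ.erase i) (k' + 1) a := by ring
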